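/- If M is a point in the plane of a square ABCD with side length a a positive integer, such that the distances from M to all four vertices are positive integers, then none of the angles ∠AMB, ∠BMC, ∠CMD, ∠DMA equals π/3. -/

import Mathlib

open EuclideanGeometry

private lemma no_int_sq_eq_three_sq (k n : ℤ) (hn : n ≠ 0) (h : k ^ 2 = 3 * n ^ 2) :
    False := by
  have h3 : Irrational (Real.sqrt 3) := by
    have := (Nat.prime_three).irrational_sqrt
    simpa using this
  have hn' : (n : ℝ) ≠ 0 := Int.cast_ne_zero.2 hn
  have hsq : ((k : ℝ) / (n : ℝ)) ^ 2 = 3 := by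
    field_simp
    have h' : (k : ℝ) ^ 2 = 3 * (n : ℝ) ^ 2 := by exact_mod_cast h
    linarith
  have hs : Real.sqrt 3 = |(k : ℝ)| / |(n : ℝ)| := by
    rw [← hsq, Real.sqrt_sq_eq_abs, abs_div]
  apply h3
  refine ⟨|(k : ℚ) / (n : ℚ)|, ?_⟩
  rw [hs]
  push_cast
  rw [abs_div]

private lemma key_lemma (a p q s : ℕ) (ha : 0 < a) (hp : 0 < p) (hq : 0 < q)
    (x y : ℝ)
    (h1 : x ^ 2 + y ^ 2 = (p : ℝ) ^ 2)
    (h2 : x ^ 2 + (y - (a : ℝ)) ^ 2 = (q : ℝ) ^ 2)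
    (h3 : (x - (a : ℝ)) ^ 2 + y ^ 2 = (s : ℝ) ^ 2)
    (hang : (a : ℝ) ^ 2 = (p : ℝ) ^ 2 + (q : ℝ) ^ 2 - (p : ℝ) * (q : ℝ)) : False := by
  have hx : 2 * (a : ℝ) * x = (a : ℝ) ^ 2 + (p : ℝ) ^ 2 - (s : ℝ) ^ 2 :=
    by linear_combination h1 - h3
  have hy : 2 * (a : ℝ) * y = (a : ℝ) ^ 2 + (p : ℝ) ^ 2 - (q : ℝ) ^ 2 :=
    by linear_combination h1 - h2
  have e1 : ((a : ℝ) ^ 2 + (p : ℝ) ^ 2 - (s : ℝ) ^ 2) ^ 2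
      + ((a : ℝ) ^ 2 + (p : ℝ) ^ 2 - (q : ℝ) ^ 2) ^ 2 = 4 * (a : ℝ) ^ 2 * (p : ℝ) ^ 2 := by
    linear_combination (-(2 * (a : ℝ) * x + ((a : ℝ) ^ 2 + (p : ℝ) ^ 2 - (s : ℝ) ^ 2))) * hx
      + (-(2 * (a : ℝ) * y + ((a : ℝ) ^ 2 + (p : ℝ) ^ 2 - (q : ℝ) ^ 2))) * hy
      + 4 * (a : ℝ) ^ 2 * h1
  have hk : ((a : ℝ) ^ 2 + (p : ℝ) ^ 2 - (s : ℝ) ^ 2) ^ 2 = 3 * ((p : ℝ) * (q : ℝ)) ^ 2 := by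
    linear_combination e1 + (-((a : ℝ) ^ 2 - (p : ℝ) ^ 2 - (q : ℝ) ^ 2 - (p : ℝ) * (q : ℝ))) * hang
  have hz : ((a : ℤ) ^ 2 + (p : ℤ) ^ 2 - (s : ℤ) ^ 2) ^ 2 = 3 * ((p : ℤ) * (q : ℤ)) ^ 2 := by
    exact_mod_cast hk
  exact no_int_sq_eq_three_sq _ _ (by positivity) hz

private lemma dist_sq_coord (M N : EuclideanSpace ℝ (Fin 2)) :
    dist M N ^ 2 = (M 0 - N 0) ^ 2 + (M 1 - N 1) ^ 2 := by
  rw [EuclideanSpace.dist_eq, Real.sq_sqrt (by positivity)]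
  simp [Fin.sum_univ_two, Real.dist_eq, sq_abs]

theorem steinhaus_square_no_pi_div_three
    (a : ℕ) (ha : 0 < a) (M : EuclideanSpace ℝ (Fin 2))
    (A B C D : EuclideanSpace ℝ (Fin 2))
    (hA : A = !₂[0, 0]) (hB : B = !₂[0, (a : ℝ)])
    (hC : C = !₂[(a : ℝ), (a : ℝ)]) (hD : D = !₂[(a : ℝ), 0])
    (hMA : ∃ n : ℕ, 0 < n ∧ dist M A = n)
    (hMB : ∃ n : ℕ, 0 < n ∧ dist M B = n)
    (hMC : ∃ n : ℕ, 0 < n ∧ dist M C = n)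
    (hMD : ∃ n : ℕ, 0 < n ∧ dist M D = n) :
    ∠ A M B ≠ Real.pi / 3 ∧ ∠ B M C ≠ Real.pi / 3 ∧
    ∠ C M D ≠ Real.pi / 3 ∧ ∠ D M A ≠ Real.pi / 3 := by
  obtain ⟨p, hp, hMAp⟩ := hMA
  obtain ⟨q, hq, hMBq⟩ := hMB
  obtain ⟨r, hr, hMCr⟩ := hMC
  obtain ⟨s, hs, hMDs⟩ := hMD
  set x : ℝ := M 0 with hxdef
  set y : ℝ := M 1 with hydef
  have hP : x ^ 2 + y ^ 2 = (p : ℝ) ^ 2 := by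
    have := dist_sq_coord M A
    rw [hMAp, hA] at this
    simpa using this.symm
  have hQ : x ^ 2 + (y - (a : ℝ)) ^ 2 = (q : ℝ) ^ 2 := by
    have := dist_sq_coord M B
    rw [hMBq, hB] at this
    simpa using this.symm
  have hR : (x - (a : ℝ)) ^ 2 + (y - (a : ℝ)) ^ 2 = (r : ℝ) ^ 2 := by
    have := dist_sq_coord M C
    rw [hMCr, hC] at this
    simpa using this.symm
  have hS : (x - (a : ℝ)) ^ 2 + y ^ 2 = (s : ℝ) ^ 2 := by
    have := dist_sq_coord M D
    rw [hMDs, hD] at this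
    simpa using this.symm
  -- law of cosines helper
  have lawc : ∀ (X Y : EuclideanSpace ℝ (Fin 2)) (m n : ℕ),
      dist M X = m → dist M Y = n → ∠ X M Y = Real.pi / 3 →
      dist X Y ^ 2 = (m : ℝ) ^ 2 + (n : ℝ) ^ 2 - (m : ℝ) * (n : ℝ) := by
    intro X Y m n hm hn hang
    have := EuclideanGeometry.law_cos X M Y
    rw [hang, Real.cos_pi_div_three, dist_comm X M, dist_comm Y M, hm, hn] at this
    rw [sq]
    rw [this]
    ring
  refine ⟨?_, ?_, ?_, ?_⟩
  · intro hang
    have hd : dist A B ^ 2 = ((a : ℝ)) ^ 2 := by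
      rw [dist_sq_coord, hA, hB]; simp
    have := lawc A B p q hMAp hMBq hang
    rw [hd] at this
    exact key_lemma a p q s ha hp hq x y hP hQ hS this
  · intro hang
    have hd : dist B C ^ 2 = ((a : ℝ)) ^ 2 := by
      rw [dist_sq_coord, hB, hC]; simp
    have := lawc B C q r hMBq hMCr hang
    rw [hd] at this
    refine key_lemma a q r p ha hq hr ((a : ℝ) - y) x ?_ ?_ ?_ this
    · linear_combination hQ
    · linear_combination hR
    · linear_combination hP
  · intro hang
    have hd : dist C D ^ 2 = ((a : ℝ)) ^ 2 := by
      rw [dist_sq_coord, hC, hD]; simp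
    have := lawc C D r s hMCr hMDs hang
    rw [hd] at this
    refine key_lemma a r s q ha hr hs ((a : ℝ) - x) ((a : ℝ) - y) ?_ ?_ ?_ this
    · linear_combination hR
    · linear_combination hS
    · linear_combination hQ
  · intro hang
    have hd : dist D A ^ 2 = ((a : ℝ)) ^ 2 := by
      rw [dist_sq_coord, hD, hA]; simp
    have := lawc D A s p hMDs hMAp hang
    rw [hd] at this
    refine key_lemma a s p r ha hs hp y ((a : ℝ) - x) ?_ ?_ ?_ this
    · linear_combination hS
    · linear_combination hP
    · linear_combination hR
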